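/- For any h with 1 ≤ h ≤ n−2, the h-embedded connectivity of the hypercube satisfies ζ_h(Q_n) ≤ 2^h (n−h). -/

import Mathlib

open SimpleGraph

def cubeGraph (n : ℕ) : SimpleGraph (Fin n → Bool) where
  Adj x y := ∃! i, x i ≠ y i
  symm := ⟨by
    rintro x y ⟨i, hi, hu⟩
    exact ⟨i, hi.symm, fun j hj => hu j hj.symm⟩⟩
  loopless := ⟨by rintro x ⟨i, hi, -⟩; exact hi rfl⟩

def starGraph (n : ℕ) [NeZero n] : SimpleGraph (Equiv.Perm (Fin n)) where
  Adj x y := ∃ i : Fin n, i ≠ 0 ∧ y = x * Equiv.swap 0 i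
  symm := ⟨by
    rintro x y ⟨i, hi, rfl⟩
    exact ⟨i, hi, by rw [mul_assoc, Equiv.swap_mul_self, mul_one]⟩⟩
  loopless := ⟨by
    rintro x ⟨i, hi, h⟩
    exact hi (Equiv.swap_eq_one_iff.mp (left_eq_mul.mp h)).symm⟩

def bubbleGraph (n : ℕ) : SimpleGraph (Equiv.Perm (Fin n)) where
  Adj x y := ∃ (i : Fin n) (hi : (i : ℕ) + 1 < n), y = x * Equiv.swap i ⟨(i : ℕ) + 1, hi⟩
  symm := ⟨by
    rintro x y ⟨i, hi, rfl⟩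
    exact ⟨i, hi, by rw [mul_assoc, Equiv.swap_mul_self, mul_one]⟩⟩
  loopless := ⟨by
    rintro x ⟨i, hi, h⟩
    have h1 := Equiv.swap_eq_one_iff.mp (left_eq_mul.mp h)
    have := congrArg Fin.val h1
    simp at this⟩

def IsEmbVertexCut {V W : Type*} (G : SimpleGraph V) (H : SimpleGraph W) (S : Set V) : Prop :=
  ¬ (G.induce Sᶜ).Connected ∧
    ∀ v ∉ S, ∃ A : Set V, v ∈ A ∧ Disjoint A S ∧ Nonempty (H ≃g G.induce A)

noncomputable def embConn {V W : Type*} (G : SimpleGraph V) (H : SimpleGraph W) : ℕ :=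
  sInf {k | ∃ S : Set V, S.Finite ∧ S.ncard = k ∧ IsEmbVertexCut G H S}

def IsEmbEdgeCut {V W : Type*} (G : SimpleGraph V) (H : SimpleGraph W) (F : Set (Sym2 V)) : Prop :=
  F ⊆ G.edgeSet ∧ ¬ (G.deleteEdges F).Connected ∧
    ∀ v : V, ∃ A : Set V, v ∈ A ∧ Nonempty (H ≃g (G.deleteEdges F).induce A)

noncomputable def embEdgeConn {V W : Type*} (G : SimpleGraph V) (H : SimpleGraph W) : ℕ :=
  sInf {k | ∃ F : Set (Sym2 V), F.Finite ∧ F.ncard = k ∧ IsEmbEdgeCut G H F}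

def IsSuperVertexCut {V : Type*} (G : SimpleGraph V) (h : ℕ) (S : Set V) : Prop :=
  ¬ (G.induce Sᶜ).Connected ∧ ∀ v ∉ S, h ≤ ((G.neighborSet v) \ S).ncard

noncomputable def superConn {V : Type*} (G : SimpleGraph V) (h : ℕ) : ℕ :=
  sInf {k | ∃ S : Set V, S.Finite ∧ S.ncard = k ∧ IsSuperVertexCut G h S}

def IsSuperEdgeCut {V : Type*} (G : SimpleGraph V) (h : ℕ) (F : Set (Sym2 V)) : Prop :=
  F ⊆ G.edgeSet ∧ ¬ (G.deleteEdges F).Connected ∧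
    ∀ v : V, h ≤ ((G.deleteEdges F).neighborSet v).ncard

noncomputable def superEdgeConn {V : Type*} (G : SimpleGraph V) (h : ℕ) : ℕ :=
  sInf {k | ∃ F : Set (Sym2 V), F.Finite ∧ F.ncard = k ∧ IsSuperEdgeCut G h F}

namespace Stmt1Aux


def tailOne (n h : ℕ) : Set (Fin n → Bool) :=
  {v | ∃! i : Fin n, h ≤ (i : ℕ) ∧ v i = true}

def psi (n h : ℕ) (p : (Fin h → Bool) × {i : Fin n // h ≤ (i : ℕ)}) : Fin n → Bool :=
  fun j => if hj : (j : ℕ) < h then p.1 ⟨j, hj⟩ else decide (j = p.2.1)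

theorem psi_injective (n h : ℕ) (hhn : h ≤ n) : Function.Injective (psi n h) := by
  rintro ⟨a, i, hi⟩ ⟨b, j, hj⟩ hab
  have h1 : a = b := by
    funext k
    have := congrFun hab ⟨k.1, lt_of_lt_of_le k.2 hhn⟩
    simp only [psi] at this
    rw [dif_pos k.2, dif_pos k.2] at this
    simpa using this
  have h2 : i = j := by
    have := congrFun hab i
    simp only [psi] at this
    rw [dif_neg (by omega), dif_neg (by omega)] at this
    simp at this
    exact this
  simp [h1, h2]

theorem range_psi (n h : ℕ) (hhn : h ≤ n) : Set.range (psi n h) = tailOne n h := by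
  ext v
  constructor
  · rintro ⟨⟨a, i, hi⟩, rfl⟩
    refine ⟨i, ⟨hi, ?_⟩, ?_⟩
    · simp only [psi]
      rw [dif_neg (by omega)]
      simp
    · rintro j ⟨hj1, hj2⟩
      simp only [psi] at hj2
      rw [dif_neg (by omega)] at hj2
      simpa using hj2
  · rintro ⟨i, ⟨hi1, hi2⟩, hu⟩
    refine ⟨⟨fun k => v ⟨k.1, lt_of_lt_of_le k.2 hhn⟩, i, hi1⟩, ?_⟩
    funext j
    simp only [psi]
    by_cases hj : (j : ℕ) < h
    · rw [dif_pos hj]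
    · rw [dif_neg hj]
      by_cases hji : j = i
      · simp [hji, hi2]
      · have : v j ≠ true := fun hvj => hji (hu j ⟨by omega, hvj⟩)
        simp [hji]
        simpa using this

theorem card_tail_sub (n h : ℕ) : Nat.card {i : Fin n // h ≤ (i : ℕ)} = n - h := by
  have e : {i : Fin n // h ≤ (i : ℕ)} ≃ Fin (n - h) := by
    refine ⟨fun i => ⟨i.1.1 - h, by omega⟩, fun j => ⟨⟨j.1 + h, by omega⟩, by simp⟩, ?_, ?_⟩
    · rintro ⟨⟨i, hi⟩, hhi⟩
      have hh : h ≤ i := hhi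
      apply Subtype.ext
      apply Fin.ext
      simp
      omega
    · rintro ⟨j, hj⟩
      ext
      simp
  rw [Nat.card_eq_of_equiv_fin e]

theorem ncard_tailOne (n h : ℕ) (hhn : h ≤ n) :
    (tailOne n h).ncard = 2 ^ h * (n - h) := by
  rw [← range_psi n h hhn, ← Set.image_univ,
    Set.ncard_image_of_injective _ (psi_injective n h hhn), Set.ncard_univ]
  rw [Nat.card_prod, Nat.card_eq_fintype_card, card_tail_sub]
  simp





def tailZero (n h : ℕ) (v : Fin n → Bool) : Prop :=
  ∀ i : Fin n, h ≤ (i : ℕ) → v i = false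

theorem step (n h : ℕ) (v w : Fin n → Bool) (hadj : (cubeGraph n).Adj v w)
    (hw : w ∉ tailOne n h) (hv : tailZero n h v) : tailZero n h w := by
  obtain ⟨i₀, hi₀, hu⟩ := hadj
  by_cases hh : h ≤ (i₀ : ℕ)
  · exfalso
    apply hw
    refine ⟨i₀, ⟨hh, ?_⟩, ?_⟩
    · have := hv i₀ hh
      revert hi₀; rw [this]
      cases w i₀ <;> simp
    · rintro j ⟨hj1, hj2⟩
      by_contra hji
      have : ¬ (v j ≠ w j) := fun hc => hji (hu j hc)
      rw [hv j hj1] at this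
      rw [hj2] at this
      simp at this
  · intro i hi
    have hne : i ≠ i₀ := by intro hc; rw [hc] at hi; omega
    have : ¬ (v i ≠ w i) := fun hc => hne (hu i hc)
    rw [hv i hi] at this
    cases hwi : w i
    · rfl
    · rw [hwi] at this; simp at this

theorem not_connected (n h : ℕ) (h2 : h + 2 ≤ n) :
    ¬ ((cubeGraph n).induce (tailOne n h)ᶜ).Connected := by
  intro hcon
  set u₀ : Fin n → Bool := fun _ => false with hu₀
  have hi1 : h < n := by omega
  have hi2 : h + 1 < n := by omega
  set j₁ : Fin n := ⟨h, hi1⟩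
  set j₂ : Fin n := ⟨h + 1, hi2⟩
  set u₂ : Fin n → Bool := fun i => decide (i = j₁ ∨ i = j₂) with hu₂def
  have hj12 : j₁ ≠ j₂ := by simp [j₁, j₂, Fin.ext_iff]
  have hu₀S : u₀ ∈ (tailOne n h)ᶜ := by
    rintro ⟨i, ⟨-, hi2'⟩, -⟩
    simp [u₀] at hi2'
  have hu₂S : u₂ ∈ (tailOne n h)ᶜ := by
    rintro ⟨i, -, hu⟩
    have e1 : j₁ = i := hu j₁ ⟨le_refl h, by simp [u₂]⟩
    have e2 : j₂ = i := hu j₂ ⟨by simp [j₂], by simp [u₂]⟩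
    exact hj12 (e1.trans e2.symm)
  have hreach := hcon.preconnected ⟨u₀, hu₀S⟩ ⟨u₂, hu₂S⟩
  obtain ⟨p⟩ := hreach
  have key : ∀ (a b : ↥(tailOne n h)ᶜ) (_ : ((cubeGraph n).induce (tailOne n h)ᶜ).Walk a b),
      tailZero n h a.1 → tailZero n h b.1 := by
    intro a b p
    induction p with
    | nil => exact fun hp => hp
    | @cons _ w _ hadj _ ih =>
      intro ha
      exact ih (step n h _ _ hadj w.2 ha)
  have hz : tailZero n h u₂ := key _ _ p (fun i _ => rfl)
  have := hz j₁ (le_refl h)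
  simp [u₂] at this



def sameTail (n h : ℕ) (v : Fin n → Bool) : Set (Fin n → Bool) :=
  {u | ∀ i : Fin n, h ≤ (i : ℕ) → u i = v i}

def extd (n h : ℕ) (v : Fin n → Bool) (a : Fin h → Bool) : Fin n → Bool :=
  fun i => if hi : (i : ℕ) < h then a ⟨i, hi⟩ else v i

theorem extd_ne_iff (n h : ℕ) (v : Fin n → Bool) (a b : Fin h → Bool) (i : Fin n) :
    extd n h v a i ≠ extd n h v b i ↔ ∃ hi : (i : ℕ) < h, a ⟨i, hi⟩ ≠ b ⟨i, hi⟩ := by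
  unfold extd
  by_cases hi : (i : ℕ) < h
  · rw [dif_pos hi, dif_pos hi]
    exact ⟨fun hne => ⟨hi, hne⟩, fun ⟨_, hne⟩ => hne⟩
  · rw [dif_neg hi, dif_neg hi]
    simp [hi]

noncomputable def cubeIso (n h : ℕ) (hhn : h ≤ n) (v : Fin n → Bool) :
    cubeGraph h ≃g (cubeGraph n).induce (sameTail n h v) where
  toFun a := ⟨extd n h v a, fun i hi => dif_neg (by omega)⟩
  invFun u := fun k => u.1 ⟨k.1, lt_of_lt_of_le k.2 hhn⟩
  left_inv a := by
    funext k
    show extd n h v a ⟨k.1, _⟩ = a k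
    unfold extd
    rw [dif_pos k.2]
  right_inv u := by
    apply Subtype.ext
    funext i
    show extd n h v (fun k => u.1 ⟨k.1, lt_of_lt_of_le k.2 hhn⟩) i = u.1 i
    unfold extd
    by_cases hi : (i : ℕ) < h
    · rw [dif_pos hi]
    · rw [dif_neg hi]
      exact (u.2 i (by omega)).symm
  map_rel_iff' := by
    intro a b
    show (cubeGraph n).Adj (extd n h v a) (extd n h v b) ↔ ∃! k, a k ≠ b k
    constructor
    · rintro ⟨i, hne, hu⟩
      obtain ⟨hi, hne'⟩ := (extd_ne_iff n h v a b i).mp hne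
      refine ⟨⟨i, hi⟩, hne', ?_⟩
      intro k hk
      have : (⟨k.1, lt_of_lt_of_le k.2 hhn⟩ : Fin n) = i := by
        apply hu
        rw [extd_ne_iff]
        exact ⟨k.2, by simpa using hk⟩
      apply Fin.ext
      simpa using congrArg Fin.val this
    · rintro ⟨k, hne, hu⟩
      refine ⟨⟨k.1, lt_of_lt_of_le k.2 hhn⟩, ?_, ?_⟩
      · show extd n h v a _ ≠ extd n h v b _
        rw [extd_ne_iff]
        exact ⟨k.2, by simpa using hne⟩
      · intro j hj
        obtain ⟨hji, hne'⟩ := (extd_ne_iff n h v a b j).mp hj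
        have : (⟨j.1, hji⟩ : Fin h) = k := hu _ hne'
        apply Fin.ext
        simpa using congrArg Fin.val this


end Stmt1Aux

/-- `ζ_h(Q_n) ≤ 2^h (n-h)` for `1 ≤ h ≤ n-2`. -/
theorem stmt1 (n h : ℕ) (h1 : 1 ≤ h) (h2 : h + 2 ≤ n) :
    embConn (cubeGraph n) (cubeGraph h) ≤ 2 ^ h * (n - h) := by
  have hhn : h ≤ n := by omega
  apply Nat.sInf_le
  refine ⟨Stmt1Aux.tailOne n h, Set.toFinite _, Stmt1Aux.ncard_tailOne n h hhn, ?_, ?_⟩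
  · exact Stmt1Aux.not_connected n h h2
  · intro v hv
    refine ⟨Stmt1Aux.sameTail n h v, fun i _ => rfl, ?_, ⟨Stmt1Aux.cubeIso n h hhn v⟩⟩
    rw [Set.disjoint_left]
    rintro u hu ⟨i, ⟨hi1, hi2⟩, hiu⟩
    apply hv
    refine ⟨i, ⟨hi1, (hu i hi1).symm.trans hi2⟩, ?_⟩
    rintro j ⟨hj1, hj2⟩
    exact hiu j ⟨hj1, (hu j hj1).trans hj2⟩
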